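/- For all integers n ≥ 1, k ≥ 1 and q ≥ 1, the solution count R_{q,n}^{(k)} satisfies 2^{(k+1)n}·R_{q,n}^{(k)} = Σ_{i=0}^{min(2n,k)} Γ_i(n,k)·2^{q(2n+k−i)}. -/

import Mathlib

open Finset

/-- The `2n × k` n-times persymmetric matrix over `F_2` associated to a parameter tuple
`alpha ∈ (F_2^{k+1})^n` : for `1 ≤ j ≤ n`, rows `2j-1` and `2j` are
`(alpha^(j)_1, ..., alpha^(j)_k)` and `(alpha^(j)_2, ..., alpha^(j)_{k+1})`. -/
def persymMatrix (n k : ℕ) (α : Fin n → Fin (k + 1) → ZMod 2) :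
    Matrix (Fin (2 * n)) (Fin k) (ZMod 2) :=
  Matrix.of fun r c =>
    α ⟨r.val / 2, by have := r.isLt; omega⟩ ⟨r.val % 2 + c.val, by have := c.isLt; omega⟩

/-- `Gamma n k i` is the number of parameter tuples `alpha ∈ (F_2^{k+1})^n` whose associated
n-times persymmetric `2n × k` matrix over `F_2` has rank `i`. -/
noncomputable def Gamma (n k i : ℕ) : ℕ :=
  Nat.card {α : Fin n → Fin (k + 1) → ZMod 2 // (persymMatrix n k α).rank = i}

/-- `Rcount q n k` is the number of tuples `(Y_1, ..., Y_q, (U_j^(i)))` of polynomials over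
`F_2` with `deg Y_i ≤ k-1`, `deg U_j^(i) ≤ 1`, and `∑ i, Y_i * U_j^(i) = 0` for every `j`. -/
noncomputable def Rcount (q n k : ℕ) : ℕ :=
  Nat.card {YU : (Fin q → Polynomial (ZMod 2)) × (Fin n → Fin q → Polynomial (ZMod 2)) //
    (∀ i, (YU.1 i).degree ≤ (k - 1 : ℕ)) ∧
    (∀ j i, (YU.2 j i).degree ≤ 1) ∧
    (∀ j, ∑ i, YU.1 i * YU.2 j i = 0)}

open Polynomial
noncomputable section AuxPersym

/-! ### Sign character on `F_2` and orthogonality -/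

def sgn (x : ZMod 2) : ℤ := if x = 0 then 1 else -1

lemma sgn_zero : sgn 0 = 1 := rfl

lemma sgn_add (a b : ZMod 2) : sgn (a + b) = sgn a * sgn b := by revert a b; decide

lemma sgn_sum {ι : Type*} (s : Finset ι) (f : ι → ZMod 2) :
    sgn (∑ i ∈ s, f i) = ∏ i ∈ s, sgn (f i) := by
  classical
  induction s using Finset.induction with
  | empty => simp [sgn_zero]
  | insert a s h ih => simp [Finset.sum_insert h, Finset.prod_insert h, sgn_add, ih]

lemma sum_sgn_mul (v : ZMod 2) : (∑ x : ZMod 2, sgn (x * v)) = if v = 0 then 2 else 0 := by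
  revert v; decide

lemma sum_sgn_dot {ι : Type*} [Fintype ι] [DecidableEq ι] (v : ι → ZMod 2) :
    (∑ x : ι → ZMod 2, sgn (∑ i, x i * v i))
      = if v = 0 then 2 ^ Fintype.card ι else 0 := by
  classical
  have h1 : ∀ x : ι → ZMod 2, sgn (∑ i, x i * v i) = ∏ i, sgn (x i * v i) := fun x =>
    sgn_sum _ _
  simp_rw [h1]
  have h2 := Finset.prod_univ_sum (fun _ : ι => (univ : Finset (ZMod 2)))
    (fun i y => sgn (y * v i))
  rw [Fintype.piFinset_univ] at h2
  rw [← h2]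
  simp_rw [sum_sgn_mul]
  by_cases hv : v = 0
  · simp [hv]
  · rw [if_neg hv]
    obtain ⟨i, hi⟩ : ∃ i, v i ≠ 0 := by
      by_contra h; push_neg at h; exact hv (funext h)
    exact Finset.prod_eq_zero (Finset.mem_univ i) (by simp [hi])

/-! ### Polynomials from coefficient vectors -/

def pvec {m : ℕ} (y : Fin m → ZMod 2) : Polynomial (ZMod 2) :=
  ∑ i : Fin m, Polynomial.monomial i (y i)

lemma pvec_coeff {m : ℕ} (y : Fin m → ZMod 2) (j : ℕ) :
    (pvec y).coeff j = if h : j < m then y ⟨j, h⟩ else 0 := by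
  classical
  rw [pvec, finset_sum_coeff]
  by_cases h : j < m
  · rw [dif_pos h, Finset.sum_eq_single (⟨j, h⟩ : Fin m)]
    · simp
    · intro b _ hb
      rw [coeff_monomial, if_neg]
      intro hbj; apply hb; exact Fin.ext hbj
    · simp
  · rw [dif_neg h]
    apply Finset.sum_eq_zero
    intro b _
    rw [coeff_monomial, if_neg]
    intro hbj; exact h (hbj ▸ b.isLt)

lemma pvec_degree {m : ℕ} (y : Fin m → ZMod 2) : (pvec y).degree < (m : ℕ) := by
  have : pvec y ∈ degreeLT (ZMod 2) m := by
    apply Submodule.sum_mem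
    intro i _
    exact mem_degreeLT.mpr (lt_of_le_of_lt (degree_monomial_le i (y i))
      (by exact_mod_cast WithBot.coe_lt_coe.mpr i.isLt))
  exact mem_degreeLT.mp this

lemma pvec_coeffs {m : ℕ} (p : Polynomial (ZMod 2)) (hp : p.degree < (m : ℕ)) :
    pvec (fun i : Fin m => p.coeff i) = p := by
  ext j
  rw [pvec_coeff]
  by_cases h : j < m
  · simp [h]
  · rw [dif_neg h]
    exact (coeff_eq_zero_of_degree_lt (lt_of_lt_of_le hp
      (by exact_mod_cast Nat.le_of_not_lt h))).symm

lemma degree_le_iff_lt_succ (p : Polynomial (ZMod 2)) (m : ℕ) :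
    p.degree ≤ (m : ℕ) ↔ p.degree < ((m + 1 : ℕ) : ℕ) := by
  rw [degree_le_iff_coeff_zero, degree_lt_iff_coeff_zero]
  apply forall_congr'
  intro j
  have h : ((m : WithBot ℕ) < j ↔ ((m + 1 : ℕ) : WithBot ℕ) ≤ j) := by
    rw [Nat.cast_lt, Nat.cast_le]; omega
  rw [h, Nat.cast_le]

/-! ### Kernel cardinality and rank bound -/

lemma card_ker_eq {r c : ℕ} (M : Matrix (Fin r) (Fin c) (ZMod 2)) :
    Nat.card {y : Fin c → ZMod 2 // M.mulVec y = 0} = 2 ^ (c - M.rank) := by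
  classical
  have h1 : Nat.card {y : Fin c → ZMod 2 // M.mulVec y = 0}
      = Nat.card (LinearMap.ker M.mulVecLin) := by
    apply Nat.card_congr
    apply Equiv.subtypeEquivRight
    intro y
    simp [LinearMap.mem_ker, Matrix.mulVecLin_apply]
  rw [h1]
  have h2 : Nat.card (LinearMap.ker M.mulVecLin)
      = Fintype.card (LinearMap.ker M.mulVecLin) := Nat.card_eq_fintype_card
  rw [h2, Module.card_eq_pow_finrank (K := ZMod 2), ZMod.card]
  congr 1
  have h3 := LinearMap.finrank_range_add_finrank_ker M.mulVecLin
  have h4 : Module.finrank (ZMod 2) (Fin c → ZMod 2) = c := by simp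
  rw [h4] at h3
  have : M.rank = Module.finrank (ZMod 2) (LinearMap.range M.mulVecLin) := rfl
  omega

lemma rank_le_min' {r c : ℕ} (M : Matrix (Fin r) (Fin c) (ZMod 2)) :
    M.rank ≤ min r c := by
  refine le_min ?_ ?_
  · simpa using M.rank_le_card_height
  · simpa using M.rank_le_card_width

/-! ### The pairing `phi` -/

def phi {k : ℕ} (a : Fin (k + 1) → ZMod 2) (p : Polynomial (ZMod 2)) : ZMod 2 :=
  ∑ m : Fin (k + 1), a m * p.coeff m

lemma phi_finsum {k : ℕ} (a : Fin (k + 1) → ZMod 2) {ι : Type*} (s : Finset ι)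
    (f : ι → Polynomial (ZMod 2)) :
    phi a (∑ i ∈ s, f i) = ∑ i ∈ s, phi a (f i) := by
  unfold phi
  simp_rw [finset_sum_coeff, Finset.mul_sum]
  rw [Finset.sum_comm]

lemma phi_C_mul {k : ℕ} (a : Fin (k + 1) → ZMod 2) (c : ZMod 2) (p : Polynomial (ZMod 2)) :
    phi a (Polynomial.C c * p) = c * phi a p := by
  unfold phi
  simp_rw [coeff_C_mul, Finset.mul_sum]
  congr 1; funext m; ring

lemma phi_add {k : ℕ} (a : Fin (k + 1) → ZMod 2) (p q : Polynomial (ZMod 2)) :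
    phi a (p + q) = phi a p + phi a q := by
  unfold phi
  simp_rw [coeff_add, mul_add, Finset.sum_add_distrib]

lemma pvec_two (w : Fin 2 → ZMod 2) :
    pvec w = Polynomial.C (w 0) + Polynomial.C (w 1) * Polynomial.X := by
  simp [pvec, Fin.sum_univ_two, ← Polynomial.C_mul_X_pow_eq_monomial]

lemma phi_pvec_mul {k : ℕ} (a : Fin (k + 1) → ZMod 2) (y : Fin k → ZMod 2)
    (w : Fin 2 → ZMod 2) :
    phi a (pvec y * pvec w)
      = w 0 * (∑ c : Fin k, a c.castSucc * y c) + w 1 * (∑ c : Fin k, a c.succ * y c) := by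
  have hw : pvec y * pvec w
      = Polynomial.C (w 0) * pvec y + Polynomial.C (w 1) * (pvec y * Polynomial.X) := by
    rw [pvec_two]; ring
  rw [hw, phi_add, phi_C_mul, phi_C_mul]
  congr 2
  · unfold phi
    rw [Fin.sum_univ_castSucc]
    have hlast : (pvec y).coeff ((Fin.last k : Fin (k + 1)) : ℕ) = 0 := by
      rw [pvec_coeff]; simp
    rw [hlast, mul_zero, add_zero]
    apply Finset.sum_congr rfl
    intro c _
    rw [pvec_coeff, dif_pos (by simp [Fin.coe_castSucc] : ((c.castSucc : Fin (k+1)) : ℕ) < k)]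
    exact congrArg (fun t => a c.castSucc * y t) (Fin.ext (by simp))
  · unfold phi
    rw [Fin.sum_univ_succ]
    have h0 : (pvec y * Polynomial.X).coeff ((0 : Fin (k + 1)) : ℕ) = 0 := by
      simp [Polynomial.coeff_mul_X_zero]
    rw [h0, mul_zero, zero_add]
    apply Finset.sum_congr rfl
    intro c _
    congr 1
    have : ((c.succ : Fin (k + 1)) : ℕ) = (c : ℕ) + 1 := rfl
    rw [this, Polynomial.coeff_mul_X, pvec_coeff, dif_pos c.isLt]

end AuxPersym


section MV
variable {n k : ℕ}

lemma mv_even (α : Fin n → Fin (k + 1) → ZMod 2) (y : Fin k → ZMod 2) (j : Fin n) :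
    (persymMatrix n k α).mulVec y ⟨2 * j.val, by have := j.isLt; omega⟩
      = ∑ c : Fin k, α j c.castSucc * y c := by
  rw [Matrix.mulVec, dotProduct]
  apply Finset.sum_congr rfl
  intro c _
  congr 1
  show α ⟨2 * j.val / 2, _⟩ ⟨2 * j.val % 2 + c.val, _⟩ = α j c.castSucc
  congr 1
  · refine Fin.ext ?_
    show 2 * j.val / 2 = j.val
    omega
  · refine Fin.ext ?_
    show 2 * j.val % 2 + c.val = c.castSucc.val
    rw [Fin.coe_castSucc]
    omega

lemma mv_odd (α : Fin n → Fin (k + 1) → ZMod 2) (y : Fin k → ZMod 2) (j : Fin n) :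
    (persymMatrix n k α).mulVec y ⟨2 * j.val + 1, by have := j.isLt; omega⟩
      = ∑ c : Fin k, α j c.succ * y c := by
  rw [Matrix.mulVec, dotProduct]
  apply Finset.sum_congr rfl
  intro c _
  congr 1
  show α ⟨(2 * j.val + 1) / 2, _⟩ ⟨(2 * j.val + 1) % 2 + c.val, _⟩ = α j c.succ
  congr 1
  · refine Fin.ext ?_
    show (2 * j.val + 1) / 2 = j.val
    omega
  · refine Fin.ext ?_
    show (2 * j.val + 1) % 2 + c.val = c.succ.val
    rw [Fin.val_succ]
    omega

end MV

section TT
variable {n k : ℕ}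

lemma sum_w (A B : ZMod 2) :
    (∑ w : Fin 2 → ZMod 2, sgn (w 0 * A + w 1 * B)) = if A = 0 ∧ B = 0 then 4 else 0 := by
  have h := sum_sgn_dot (ι := Fin 2) ![A, B]
  have h2 : ∀ w : Fin 2 → ZMod 2, (∑ i, w i * ![A, B] i) = w 0 * A + w 1 * B := by
    intro w; rw [Fin.sum_univ_two]; simp
  simp_rw [h2] at h
  rw [h]
  have h3 : (![A, B] = 0) ↔ (A = 0 ∧ B = 0) := by
    simp [funext_iff, Fin.forall_fin_two]
  rw [if_congr h3 rfl rfl]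
  norm_num

lemma ker_cond_iff (α : Fin n → Fin (k + 1) → ZMod 2) (y : Fin k → ZMod 2) :
    (∀ j : Fin n, (∑ c : Fin k, α j c.castSucc * y c) = 0
        ∧ (∑ c : Fin k, α j c.succ * y c) = 0)
      ↔ (persymMatrix n k α).mulVec y = 0 := by
  constructor
  · intro K
    funext r
    have hj : r.val / 2 < n := by have := r.isLt; omega
    rcases Nat.mod_two_eq_zero_or_one r.val with h | h
    · have hr : r = (⟨2 * ((⟨r.val / 2, hj⟩ : Fin n) : ℕ), by have := r.isLt; omega⟩ :
          Fin (2 * n)) := Fin.ext (by show r.val = 2 * (r.val / 2); omega)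
      rw [hr, mv_even]
      exact (K ⟨r.val / 2, hj⟩).1
    · have hr : r = (⟨2 * ((⟨r.val / 2, hj⟩ : Fin n) : ℕ) + 1, by have := r.isLt; omega⟩ :
          Fin (2 * n)) := Fin.ext (by show r.val = 2 * (r.val / 2) + 1; omega)
      rw [hr, mv_odd]
      exact (K ⟨r.val / 2, hj⟩).2
  · intro h j
    constructor
    · rw [← mv_even α y j]; exact congrFun h _
    · rw [← mv_odd α y j]; exact congrFun h _

lemma prod_if_ker (α : Fin n → Fin (k + 1) → ZMod 2) (y : Fin k → ZMod 2) :
    (∏ j : Fin n, ∑ w : Fin 2 → ZMod 2, sgn (phi (α j) (pvec y * pvec w)))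
      = if (persymMatrix n k α).mulVec y = 0 then (4 : ℤ) ^ n else 0 := by
  classical
  have hj : ∀ j : Fin n, (∑ w : Fin 2 → ZMod 2, sgn (phi (α j) (pvec y * pvec w)))
      = if (∑ c : Fin k, α j c.castSucc * y c) = 0 ∧ (∑ c : Fin k, α j c.succ * y c) = 0
        then (4 : ℤ) else 0 := by
    intro j
    simp_rw [phi_pvec_mul]
    exact sum_w _ _
  simp_rw [hj]
  by_cases H : (persymMatrix n k α).mulVec y = 0
  · rw [if_pos H]
    have K := (ker_cond_iff α y).mpr H
    rw [Finset.prod_congr rfl (fun j _ => if_pos (K j)), Finset.prod_const,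
      Finset.card_univ, Fintype.card_fin]
  · rw [if_neg H]
    have K : ¬ ∀ j : Fin n, (∑ c : Fin k, α j c.castSucc * y c) = 0
        ∧ (∑ c : Fin k, α j c.succ * y c) = 0 := fun K => H ((ker_cond_iff α y).mp K)
    push_neg at K
    obtain ⟨j, hjne⟩ := K
    refine Finset.prod_eq_zero (Finset.mem_univ j) ?_
    rw [if_neg]
    intro hc
    exact hjne hc.1 hc.2

lemma T_eq (α : Fin n → Fin (k + 1) → ZMod 2) :
    (∑ z : (Fin k → ZMod 2) × (Fin n → Fin 2 → ZMod 2),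
        ∏ j : Fin n, sgn (phi (α j) (pvec z.1 * pvec (z.2 j))))
      = 2 ^ (2 * n + k - (persymMatrix n k α).rank) := by
  classical
  rw [Fintype.sum_prod_type]
  have hswap : ∀ y : Fin k → ZMod 2,
      (∑ u : Fin n → (Fin 2 → ZMod 2), ∏ j, sgn (phi (α j) (pvec y * pvec (u j))))
        = ∏ j, ∑ w : Fin 2 → ZMod 2, sgn (phi (α j) (pvec y * pvec w)) := by
    intro y
    have h2 := Finset.prod_univ_sum (fun _ : Fin n => (univ : Finset (Fin 2 → ZMod 2)))
      (fun j w => sgn (phi (α j) (pvec y * pvec w)))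
    rw [Fintype.piFinset_univ] at h2
    exact h2.symm
  simp_rw [hswap, prod_if_ker]
  rw [← Finset.sum_filter, Finset.sum_const, nsmul_eq_mul]
  have hcard : (Finset.univ.filter fun y : Fin k → ZMod 2 =>
      (persymMatrix n k α).mulVec y = 0).card = 2 ^ (k - (persymMatrix n k α).rank) := by
    rw [← Fintype.card_subtype, ← Nat.card_eq_fintype_card, card_ker_eq]
  rw [hcard]
  have hr : (persymMatrix n k α).rank ≤ k := by
    have := rank_le_min' (persymMatrix n k α); omega
  push_cast
  rw [show (4 : ℤ) = 2 ^ 2 by norm_num, ← pow_mul, ← pow_add]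
  congr 1
  omega

end TT

section Main
variable {n k q : ℕ}

lemma sum_alpha_eq (p : Fin n → Polynomial (ZMod 2))
    (hp : ∀ j, (p j).degree < ((k + 1 : ℕ) : WithBot ℕ)) :
    (∑ α : Fin n → (Fin (k + 1) → ZMod 2), ∏ j, sgn (phi (α j) (p j)))
      = if (∀ j, p j = 0) then (2 : ℤ) ^ ((k + 1) * n) else 0 := by
  classical
  have h2 := Finset.prod_univ_sum (fun _ : Fin n => (univ : Finset (Fin (k + 1) → ZMod 2)))
    (fun j a => sgn (phi a (p j)))
  rw [Fintype.piFinset_univ] at h2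
  rw [← h2]
  have hj : ∀ j : Fin n, (∑ a : Fin (k + 1) → ZMod 2, sgn (phi a (p j)))
      = if p j = 0 then (2 : ℤ) ^ (k + 1) else 0 := by
    intro j
    have h := sum_sgn_dot (fun m : Fin (k + 1) => (p j).coeff m)
    unfold phi
    rw [h, Fintype.card_fin]
    have hiff : ((fun m : Fin (k + 1) => (p j).coeff m) = 0) ↔ p j = 0 := by
      constructor
      · intro hc
        ext i
        by_cases hi : i < k + 1
        · exact congrFun hc ⟨i, hi⟩
        · exact coeff_eq_zero_of_degree_lt (lt_of_lt_of_le (hp j)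
            (by exact_mod_cast Nat.le_of_not_lt hi))
      · intro hz; funext m; simp [hz]
    rw [if_congr hiff rfl rfl]
  simp_rw [hj]
  by_cases H : ∀ j, p j = 0
  · rw [if_pos H, Finset.prod_congr rfl (fun j _ => if_pos (H j)), Finset.prod_const,
      Finset.card_univ, Fintype.card_fin, ← pow_mul]
  · rw [if_neg H]
    push_neg at H
    obtain ⟨j, hjne⟩ := H
    exact Finset.prod_eq_zero (Finset.mem_univ j) (if_neg hjne)

lemma per_alpha_eq (α : Fin n → Fin (k + 1) → ZMod 2) :
    (∑ vu : (Fin q → (Fin k → ZMod 2)) × (Fin n → Fin q → (Fin 2 → ZMod 2)),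
        ∏ j : Fin n, sgn (phi (α j) (∑ i : Fin q, pvec (vu.1 i) * pvec (vu.2 j i))))
      = 2 ^ (q * (2 * n + k - (persymMatrix n k α).rank)) := by
  classical
  set Z := (Fin k → ZMod 2) × (Fin n → (Fin 2 → ZMod 2)) with hZ
  set G : Z → ℤ := fun z => ∏ j, sgn (phi (α j) (pvec z.1 * pvec (z.2 j))) with hG
  have step1 : ∀ vu : (Fin q → (Fin k → ZMod 2)) × (Fin n → Fin q → (Fin 2 → ZMod 2)),
      (∏ j : Fin n, sgn (phi (α j) (∑ i : Fin q, pvec (vu.1 i) * pvec (vu.2 j i))))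
        = ∏ i : Fin q, G (vu.1 i, fun j => vu.2 j i) := by
    intro vu
    have : ∀ j : Fin n, sgn (phi (α j) (∑ i : Fin q, pvec (vu.1 i) * pvec (vu.2 j i)))
        = ∏ i : Fin q, sgn (phi (α j) (pvec (vu.1 i) * pvec (vu.2 j i))) := by
      intro j
      rw [phi_finsum, sgn_sum]
    simp_rw [this]
    rw [Finset.prod_comm]
  simp_rw [step1]
  -- reindex the sum as a sum over functions Fin q → Z
  have step2 : (∑ vu : (Fin q → (Fin k → ZMod 2)) × (Fin n → Fin q → (Fin 2 → ZMod 2)),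
        ∏ i : Fin q, G (vu.1 i, fun j => vu.2 j i))
      = ∑ f : Fin q → Z, ∏ i : Fin q, G (f i) := by
    exact Fintype.sum_equiv
      ({ toFun := fun vu => fun i => ((vu.1 i, fun j => vu.2 j i) : Z),
         invFun := fun f => (fun i => (f i).1, fun j i => (f i).2 j),
         left_inv := fun vu => rfl,
         right_inv := fun f => rfl }) _ _ (fun vu => rfl)
  rw [step2]
  have h2 := Finset.prod_univ_sum (fun _ : Fin q => (univ : Finset Z)) (fun _ z => G z)
  rw [Fintype.piFinset_univ] at h2
  rw [← h2, Finset.prod_const, Finset.card_univ, Fintype.card_fin]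
  rw [hG]
  rw [T_eq α, ← pow_mul, mul_comm]

end Main

section Count
variable {n k q : ℕ}

lemma degY {k : ℕ} (hk : 1 ≤ k) {p : Polynomial (ZMod 2)} (h : p.degree ≤ ((k - 1 : ℕ) : WithBot ℕ)) :
    p.degree < ((k : ℕ) : WithBot ℕ) := by
  have h2 := (degree_le_iff_lt_succ p (k - 1)).mp h
  rwa [Nat.sub_add_cancel hk] at h2

lemma degY' {k : ℕ} (hk : 1 ≤ k) {p : Polynomial (ZMod 2)} (h : p.degree < ((k : ℕ) : WithBot ℕ)) :
    p.degree ≤ ((k - 1 : ℕ) : WithBot ℕ) := by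
  apply (degree_le_iff_lt_succ p (k - 1)).mpr
  rwa [Nat.sub_add_cancel hk]

lemma degU {p : Polynomial (ZMod 2)} (h : p.degree ≤ 1) :
    p.degree < ((2 : ℕ) : WithBot ℕ) := by
  have h1 : p.degree ≤ ((1 : ℕ) : WithBot ℕ) := by exact_mod_cast h
  have h2 := (degree_le_iff_lt_succ p 1).mp h1
  exact_mod_cast h2

lemma degU' {p : Polynomial (ZMod 2)} (h : p.degree < ((2 : ℕ) : WithBot ℕ)) :
    p.degree ≤ 1 := by
  have h2 := (degree_le_iff_lt_succ p 1).mpr (by exact_mod_cast h)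
  exact_mod_cast h2

lemma rcount_card (hk : 1 ≤ k) :
    Rcount q n k
      = Nat.card {vu : (Fin q → (Fin k → ZMod 2)) × (Fin n → Fin q → (Fin 2 → ZMod 2)) //
          ∀ j, ∑ i, pvec (vu.1 i) * pvec (vu.2 j i) = 0} := by
  unfold Rcount
  apply Nat.card_congr
  refine
    { toFun := fun YU =>
        ⟨(fun i m => (YU.1.1 i).coeff m, fun j i s => (YU.1.2 j i).coeff s), ?_⟩,
      invFun := fun vu =>
        ⟨(fun i => pvec (vu.1.1 i), fun j i => pvec (vu.1.2 j i)), ?_, ?_, ?_⟩,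
      left_inv := ?_, right_inv := ?_ }
  · intro j
    have hY := YU.2.1
    have hU := YU.2.2.1
    have h := YU.2.2.2 j
    calc (∑ i, pvec (fun m : Fin k => (YU.1.1 i).coeff m)
            * pvec (fun s : Fin 2 => (YU.1.2 j i).coeff s))
        = ∑ i, YU.1.1 i * YU.1.2 j i := by
          apply Finset.sum_congr rfl
          intro i _
          rw [pvec_coeffs _ (degY hk (hY i)), pvec_coeffs _ (degU (hU j i))]
      _ = 0 := h
  · intro i
    exact degY' hk (pvec_degree (vu.1.1 i))
  · intro j i
    exact degU' (pvec_degree (vu.1.2 j i))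
  · exact vu.2
  · rintro ⟨⟨Y, U⟩, hY, hU, h⟩
    apply Subtype.ext
    simp only
    refine Prod.ext ?_ ?_
    · funext i
      exact pvec_coeffs _ (degY hk (hY i))
    · funext j i
      exact pvec_coeffs _ (degU (hU j i))
  · rintro ⟨⟨y, u⟩, hvu⟩
    apply Subtype.ext
    simp only
    refine Prod.ext ?_ ?_
    · funext i m
      show (pvec (y i)).coeff m = y i m
      rw [pvec_coeff, dif_pos m.isLt]
    · funext j i s
      show (pvec (u j i)).coeff s = u j i s
      rw [pvec_coeff, dif_pos s.isLt]

end Count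

section Final
variable {n k q : ℕ}

lemma deg_sum_lt (y : Fin q → (Fin k → ZMod 2)) (u : Fin q → (Fin 2 → ZMod 2)) :
    (∑ i, pvec (y i) * pvec (u i)).degree < ((k + 1 : ℕ) : WithBot ℕ) := by
  apply lt_of_le_of_lt (degree_sum_le _ _)
  rw [Finset.sup_lt_iff (WithBot.bot_lt_coe _)]
  intro i _
  apply lt_of_le_of_lt (degree_mul_le _ _)
  have hb : (pvec (u i)).degree ≤ (1 : WithBot ℕ) := degU' (pvec_degree (u i))
  have ha : (pvec (y i)).degree + 1 ≤ ((k : ℕ) : WithBot ℕ) :=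
    Nat.WithBot.add_one_le_of_lt (pvec_degree (y i))
  calc (pvec (y i)).degree + (pvec (u i)).degree
      ≤ (pvec (y i)).degree + 1 := add_le_add le_rfl hb
    _ ≤ ((k : ℕ) : WithBot ℕ) := ha
    _ < ((k + 1 : ℕ) : WithBot ℕ) := by exact_mod_cast Nat.lt_succ_self k

theorem rcount_eq_gamma_sum (n k q : ℕ) (hn : 1 ≤ n) (hk : 1 ≤ k) (hq : 1 ≤ q) :
    2 ^ ((k + 1) * n) * Rcount q n k
      = ∑ i ∈ Finset.range (min (2 * n) k + 1),
          Gamma n k i * 2 ^ (q * (2 * n + k - i)) := by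
  classical
  have key : ((2 : ℤ) ^ ((k + 1) * n)) * (Rcount q n k : ℤ)
      = ∑ i ∈ Finset.range (min (2 * n) k + 1),
          (Gamma n k i : ℤ) * 2 ^ (q * (2 * n + k - i)) := by
    have hc : (Rcount q n k : ℤ)
        = (((univ : Finset ((Fin q → (Fin k → ZMod 2)) × (Fin n → Fin q → (Fin 2 → ZMod 2)))).filter
            (fun vu => ∀ j, ∑ i, pvec (vu.1 i) * pvec (vu.2 j i) = 0)).card : ℤ) := by
      rw [rcount_card hk, Nat.card_eq_fintype_card, Fintype.card_subtype]
    have h1 : ((2 : ℤ) ^ ((k + 1) * n)) * (Rcount q n k : ℤ)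
        = ∑ vu : (Fin q → (Fin k → ZMod 2)) × (Fin n → Fin q → (Fin 2 → ZMod 2)),
            (if (∀ j, ∑ i, pvec (vu.1 i) * pvec (vu.2 j i) = 0)
              then (2 : ℤ) ^ ((k + 1) * n) else 0) := by
      rw [hc, ← Finset.sum_filter, Finset.sum_const, nsmul_eq_mul, mul_comm]
    rw [h1]
    have h2 : ∀ vu : (Fin q → (Fin k → ZMod 2)) × (Fin n → Fin q → (Fin 2 → ZMod 2)),
        (if (∀ j, ∑ i, pvec (vu.1 i) * pvec (vu.2 j i) = 0)
            then (2 : ℤ) ^ ((k + 1) * n) else 0)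
          = ∑ α : Fin n → (Fin (k + 1) → ZMod 2),
              ∏ j, sgn (phi (α j) (∑ i, pvec (vu.1 i) * pvec (vu.2 j i))) := by
      intro vu
      rw [sum_alpha_eq _ (fun j => deg_sum_lt vu.1 (fun i => vu.2 j i))]
    simp_rw [h2]
    rw [Finset.sum_comm]
    have h4 : ∀ α : Fin n → Fin (k + 1) → ZMod 2,
        (∑ vu : (Fin q → (Fin k → ZMod 2)) × (Fin n → Fin q → (Fin 2 → ZMod 2)),
            ∏ j, sgn (phi (α j) (∑ i, pvec (vu.1 i) * pvec (vu.2 j i))))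
          = (2 : ℤ) ^ (q * (2 * n + k - (persymMatrix n k α).rank)) := fun α =>
      per_alpha_eq α
    simp_rw [h4]
    rw [← Finset.sum_fiberwise_of_maps_to (g := fun α => (persymMatrix n k α).rank)
      (t := Finset.range (min (2 * n) k + 1))
      (fun α _ => Finset.mem_range.mpr
        (by show (persymMatrix n k α).rank < _
            have := rank_le_min' (persymMatrix n k α); omega))]
    apply Finset.sum_congr rfl
    intro i hi
    have hcongr : ∀ α ∈ (univ : Finset (Fin n → Fin (k + 1) → ZMod 2)).filter
        (fun α => (persymMatrix n k α).rank = i),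
        (2 : ℤ) ^ (q * (2 * n + k - (persymMatrix n k α).rank)) = 2 ^ (q * (2 * n + k - i)) := by
      intro α hα
      rw [(Finset.mem_filter.mp hα).2]
    rw [Finset.sum_congr rfl hcongr, Finset.sum_const, nsmul_eq_mul]
    congr 1
    unfold Gamma
    rw [Nat.card_eq_fintype_card, Fintype.card_subtype]
  exact_mod_cast key


end Final
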